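/- Let f : X → B be a wrinkled fibration and p ∈ Crit_f a cusp point. Then the vertical space V_p = ker(df|_p), which is 3-dimensional, decomposes as V_p = F⁺_p ∪ F⁰_p ∪ F⁻_p into positive, null and negative vectors with respect to the intrinsic second derivative δ²_p f (with cokernel oriented by the cusp direction): F⁰_p is the union of two planes intersecting in the line T_p Crit_f, while F⁺_p and F⁻_p each have exactly two convex (hence contractible) components; moreover, in any model coordinates (t,x,y,z) one has ∂_y|_p ∈ F⁺_p and ∂_z|_p ∈ F⁻_p. -/

import Mathlib

noncomputable section

/-- The cusp model `C(t,x,y,z) = (t, x³ + 3tx + y² − z²)`.  By definition of a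
cusp point of a wrinkled fibration `f : X → B`, in suitable model coordinates
centered at the cusp point `p` (and at `f(p)`) the map `f` is exactly this model,
under which the vertical space `V_p = ker(df|_p)`, the intrinsic second
derivative `δ²_p f` (with cokernel oriented by the cusp direction) and
`T_p Crit_f` correspond to `ker(dC|₀)`, the Hessian form `v ↦ 2 v_y² − 2 v_z²`
(represented by `diag(0,2,−2)`), and the tangent of the critical curve
`x ↦ (−x², x, 0, 0)` at `0`. -/
def CuspModel : (Fin 4 → ℝ) → (Fin 2 → ℝ) := fun p =>
  ![p 0, (p 1) ^ 3 + 3 * p 0 * p 1 + (p 2) ^ 2 - (p 3) ^ 2]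

/-- The coordinate vectors `∂_t, ∂_x, ∂_y, ∂_z`. -/
def e (i : Fin 4) : Fin 4 → ℝ := Pi.single i 1

/-- The vertical space at the cusp point: `V = ker(dC|₀)`. -/
def V : Set (Fin 4 → ℝ) := {v | v ∈ LinearMap.ker (fderiv ℝ CuspModel 0 : (Fin 4 → ℝ) →ₗ[ℝ] (Fin 2 → ℝ))}

/-- The intrinsic second derivative at the cusp, in model coordinates. -/
def q (v : Fin 4 → ℝ) : ℝ := 2 * (v 2) ^ 2 - 2 * (v 3) ^ 2

/-- Positive vectors. -/
def Fplus : Set (Fin 4 → ℝ) := {v | v ∈ V ∧ 0 < q v}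
/-- Null vectors. -/
def Fnull : Set (Fin 4 → ℝ) := {v | v ∈ V ∧ q v = 0}
/-- Negative vectors. -/
def Fminus : Set (Fin 4 → ℝ) := {v | v ∈ V ∧ q v < 0}

-- the candidate derivative
def L : (Fin 4 → ℝ) →L[ℝ] (Fin 2 → ℝ) :=
  ContinuousLinearMap.pi ![ContinuousLinearMap.proj 0, 0]

lemma hasFDeriv : HasFDerivAt CuspModel L 0 := by
  rw [show CuspModel = fun p i => (![fun p : Fin 4 → ℝ => p 0,
      fun p : Fin 4 → ℝ => (p 1) ^ 3 + 3 * p 0 * p 1 + (p 2) ^ 2 - (p 3) ^ 2] :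
      Fin 2 → (Fin 4 → ℝ) → ℝ) i p from by
    funext p i; fin_cases i <;> simp [CuspModel]]
  refine hasFDerivAt_pi.mpr fun i => ?_
  fin_cases i
  · exact (ContinuousLinearMap.proj 0 : (Fin 4 → ℝ) →L[ℝ] ℝ).hasFDerivAt
  · have h : ∀ j : Fin 4, HasFDerivAt (fun p : Fin 4 → ℝ => p j)
        (ContinuousLinearMap.proj j : (Fin 4 → ℝ) →L[ℝ] ℝ) (0 : Fin 4 → ℝ) := fun j => by
      exact (ContinuousLinearMap.proj j : (Fin 4 → ℝ) →L[ℝ] ℝ).hasFDerivAt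
    have key : HasFDerivAt (fun p : Fin 4 → ℝ =>
        p 1 * (p 1 * p 1) + 3 * p 0 * p 1 + p 2 * p 2 - p 3 * p 3)
        (0 : (Fin 4 → ℝ) →L[ℝ] ℝ) 0 := by
      have h111 := (h 1).mul ((h 1).mul (h 1))
      have h01 := (((h 0).const_mul (3:ℝ)).mul (h 1))
      have h22 := (h 2).mul (h 2)
      have h33 := (h 3).mul (h 3)
      have := ((h111.add h01).add h22).sub h33
      simp [Pi.mul_def, Pi.add_def, Pi.sub_def] at this
      exact this
    have : (fun p : Fin 4 → ℝ => (p 1) ^ 3 + 3 * p 0 * p 1 + (p 2) ^ 2 - (p 3) ^ 2)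
        = fun p : Fin 4 → ℝ => p 1 * (p 1 * p 1) + 3 * p 0 * p 1 + p 2 * p 2 - p 3 * p 3 := by
      funext p; ring
    simp only [Matrix.cons_val_one, Matrix.head_cons, this]
    simpa [L] using key

lemma fderivCusp : fderiv ℝ CuspModel 0 = L := hasFDeriv.fderiv

lemma mem_V_iff (v : Fin 4 → ℝ) : v ∈ V ↔ v 0 = 0 := by
  simp only [V, Set.mem_setOf_eq, LinearMap.mem_ker, fderivCusp]
  constructor
  · intro hv
    have := congrFun (show L v = 0 from hv) 0
    simpa [L, ContinuousLinearMap.pi_apply] using this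
  · intro hv
    ext i
    fin_cases i <;> simp [L, ContinuousLinearMap.pi_apply, hv]

lemma e_apply (i j : Fin 4) : e i j = if j = i then 1 else 0 := by
  simp [e, Pi.single_apply]

lemma mem_span1 (v : Fin 4 → ℝ) :
    v ∈ Submodule.span ℝ {e 1, e 2 + e 3} ↔ v 0 = 0 ∧ v 3 = v 2 := by
  rw [Submodule.mem_span_pair]
  constructor
  · rintro ⟨m, n, rfl⟩
    refine ⟨?_, ?_⟩ <;> simp [e_apply]
  · rintro ⟨h0, h3⟩
    refine ⟨v 1, v 2, ?_⟩
    funext i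
    fin_cases i <;> simp [e_apply, h0, h3.symm]

lemma mem_span2 (v : Fin 4 → ℝ) :
    v ∈ Submodule.span ℝ {e 1, e 2 - e 3} ↔ v 0 = 0 ∧ v 3 = -v 2 := by
  rw [Submodule.mem_span_pair]
  constructor
  · rintro ⟨m, n, rfl⟩
    refine ⟨?_, ?_⟩ <;> simp [e_apply]
  · rintro ⟨h0, h3⟩
    refine ⟨v 1, v 2, ?_⟩
    funext i
    fin_cases i <;> simp [e_apply, h0, h3]

lemma mem_span_e1 (v : Fin 4 → ℝ) :
    v ∈ Submodule.span ℝ {e 1} ↔ v 0 = 0 ∧ v 2 = 0 ∧ v 3 = 0 := by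
  rw [Submodule.mem_span_singleton]
  constructor
  · rintro ⟨a, rfl⟩
    refine ⟨?_, ?_, ?_⟩ <;> simp [e_apply]
  · rintro ⟨h0, h2, h3⟩
    refine ⟨v 1, ?_⟩
    funext i
    fin_cases i <;> simp [e_apply, h0, h2, h3]

lemma finrank_ker : Module.finrank ℝ (LinearMap.ker (fderiv ℝ CuspModel 0 : (Fin 4 → ℝ) →ₗ[ℝ] (Fin 2 → ℝ))) = 3 := by
  have hk : LinearMap.ker (fderiv ℝ CuspModel 0 : (Fin 4 → ℝ) →ₗ[ℝ] (Fin 2 → ℝ))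
      = LinearMap.ker (LinearMap.proj (R := ℝ) (φ := fun _ : Fin 4 => ℝ) 0) := by
    ext v
    have := mem_V_iff v
    simp only [V, Set.mem_setOf_eq] at this
    simp [this, LinearMap.mem_ker, LinearMap.proj_apply]
  rw [hk]
  have hsurj : LinearMap.range (LinearMap.proj (R := ℝ) (φ := fun _ : Fin 4 => ℝ) 0) = ⊤ :=
    LinearMap.range_eq_top.mpr fun r => ⟨fun _ => r, rfl⟩
  have := LinearMap.finrank_range_add_finrank_ker
    (LinearMap.proj (R := ℝ) (φ := fun _ : Fin 4 => ℝ) 0)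
  rw [hsurj] at this
  simp [Module.finrank_pi] at this
  omega

lemma lin0 : IsLinearMap ℝ (fun v : Fin 4 → ℝ => v 0) := ⟨fun _ _ => rfl, fun _ _ => rfl⟩
lemma lin23m : IsLinearMap ℝ (fun v : Fin 4 → ℝ => v 2 - v 3) :=
  ⟨fun x y => by simp [Pi.add_apply]; ring, fun c x => by simp [Pi.smul_apply]; ring⟩
lemma lin23p : IsLinearMap ℝ (fun v : Fin 4 → ℝ => v 2 + v 3) :=
  ⟨fun x y => by simp [Pi.add_apply]; ring, fun c x => by simp [Pi.smul_apply]; ring⟩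

def Ap : Set (Fin 4 → ℝ) :=
  {v | v 0 = 0} ∩ ({v | 0 < v 2 - v 3} ∩ {v | 0 < v 2 + v 3})
def Bp : Set (Fin 4 → ℝ) :=
  {v | v 0 = 0} ∩ ({v | v 2 - v 3 < 0} ∩ {v | v 2 + v 3 < 0})
def Am : Set (Fin 4 → ℝ) :=
  {v | v 0 = 0} ∩ ({v | 0 < v 3 - v 2} ∩ {v | 0 < v 3 + v 2})
def Bm : Set (Fin 4 → ℝ) :=
  {v | v 0 = 0} ∩ ({v | v 3 - v 2 < 0} ∩ {v | v 3 + v 2 < 0})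

lemma lin32m : IsLinearMap ℝ (fun v : Fin 4 → ℝ => v 3 - v 2) :=
  ⟨fun x y => by simp [Pi.add_apply]; ring, fun c x => by simp [Pi.smul_apply]; ring⟩
lemma lin32p : IsLinearMap ℝ (fun v : Fin 4 → ℝ => v 3 + v 2) :=
  ⟨fun x y => by simp [Pi.add_apply]; ring, fun c x => by simp [Pi.smul_apply]; ring⟩

lemma convexAp : Convex ℝ Ap :=
  (convex_hyperplane lin0 0).inter ((convex_halfSpace_gt lin23m 0).inter (convex_halfSpace_gt lin23p 0))
lemma convexBp : Convex ℝ Bp :=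
  (convex_hyperplane lin0 0).inter ((convex_halfSpace_lt lin23m 0).inter (convex_halfSpace_lt lin23p 0))
lemma convexAm : Convex ℝ Am :=
  (convex_hyperplane lin0 0).inter ((convex_halfSpace_gt lin32m 0).inter (convex_halfSpace_gt lin32p 0))
lemma convexBm : Convex ℝ Bm :=
  (convex_hyperplane lin0 0).inter ((convex_halfSpace_lt lin32m 0).inter (convex_halfSpace_lt lin32p 0))

lemma e2_mem_Ap : e 2 ∈ Ap := by
  refine ⟨?_, ?_, ?_⟩ <;> simp [Ap, e_apply]
lemma e2_mem_Bp : -e 2 ∈ Bp := by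
  refine ⟨?_, ?_, ?_⟩ <;> simp [Bp, e_apply]
lemma e3_mem_Am : e 3 ∈ Am := by
  refine ⟨?_, ?_, ?_⟩ <;> simp [Am, e_apply]
lemma e3_mem_Bm : -e 3 ∈ Bm := by
  refine ⟨?_, ?_, ?_⟩ <;> simp [Bm, e_apply]

lemma Fplus_eq : Fplus = Ap ∪ Bp := by
  ext v
  simp only [Fplus, Set.mem_setOf_eq, mem_V_iff, q, Ap, Bp, Set.mem_union,
    Set.mem_inter_iff]
  constructor
  · rintro ⟨h0, hq⟩
    have hprod : 0 < (v 2 - v 3) * (v 2 + v 3) := by nlinarith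
    rcases mul_pos_iff.mp hprod with ⟨h1, h2⟩ | ⟨h1, h2⟩
    · exact Or.inl ⟨h0, h1, h2⟩
    · exact Or.inr ⟨h0, h1, h2⟩
  · rintro (⟨h0, h1, h2⟩ | ⟨h0, h1, h2⟩) <;> exact ⟨h0, by nlinarith⟩

lemma Fminus_eq : Fminus = Am ∪ Bm := by
  ext v
  simp only [Fminus, Set.mem_setOf_eq, mem_V_iff, q, Am, Bm, Set.mem_union,
    Set.mem_inter_iff]
  constructor
  · rintro ⟨h0, hq⟩
    have hprod : 0 < (v 3 - v 2) * (v 3 + v 2) := by nlinarith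
    rcases mul_pos_iff.mp hprod with ⟨h1, h2⟩ | ⟨h1, h2⟩
    · exact Or.inl ⟨h0, h1, h2⟩
    · exact Or.inr ⟨h0, h1, h2⟩
  · rintro (⟨h0, h1, h2⟩ | ⟨h0, h1, h2⟩) <;> exact ⟨h0, by nlinarith⟩

lemma disjAB : Disjoint Ap Bp := by
  rw [Set.disjoint_left]
  rintro v ⟨-, h1, -⟩ ⟨-, h2, -⟩
  simp only [Set.mem_setOf_eq] at h1 h2
  linarith
lemma disjABm : Disjoint Am Bm := by
  rw [Set.disjoint_left]
  rintro v ⟨-, h1, -⟩ ⟨-, h2, -⟩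
  simp only [Set.mem_setOf_eq] at h1 h2
  linarith


/--
At a cusp point of a wrinkled fibration (in model coordinates):
the vertical space `V = ker(df|_p)` is 3-dimensional and decomposes as
`V = F⁺ ∪ F⁰ ∪ F⁻` into positive, null and negative vectors of `δ²_p f`;
`F⁰` is the union of the two planes `span(∂_x, ∂_y ± ∂_z)` intersecting in the
line `T_p Crit_f = span(∂_x)` (the tangent line of the critical curve
`x ↦ (−x², x, 0, 0)`); `F⁺` and `F⁻` each have exactly two disjoint nonempty
convex (hence contractible) components; and `∂_y ∈ F⁺`, `∂_z ∈ F⁻`.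
-/
theorem cusp_vertical_space_decomposition :
    Module.finrank ℝ (LinearMap.ker (fderiv ℝ CuspModel 0 : (Fin 4 → ℝ) →ₗ[ℝ] (Fin 2 → ℝ))) = 3 ∧
    V = Fplus ∪ Fnull ∪ Fminus ∧
    Fnull = (↑(Submodule.span ℝ {e 1, e 2 + e 3})
              ∪ ↑(Submodule.span ℝ {e 1, e 2 - e 3}) : Set (Fin 4 → ℝ)) ∧
    (Submodule.span ℝ {e 1, e 2 + e 3} ⊓ Submodule.span ℝ {e 1, e 2 - e 3}
        : Submodule ℝ (Fin 4 → ℝ)) = Submodule.span ℝ {e 1} ∧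
    HasDerivAt (fun x : ℝ => (![-(x ^ 2), x, 0, 0] : Fin 4 → ℝ)) (e 1) 0 ∧
    (∃ A B : Set (Fin 4 → ℝ), Fplus = A ∪ B ∧ Disjoint A B ∧
        A.Nonempty ∧ B.Nonempty ∧ Convex ℝ A ∧ Convex ℝ B ∧
        IsConnected A ∧ IsConnected B) ∧
    (∃ A B : Set (Fin 4 → ℝ), Fminus = A ∪ B ∧ Disjoint A B ∧
        A.Nonempty ∧ B.Nonempty ∧ Convex ℝ A ∧ Convex ℝ B ∧
        IsConnected A ∧ IsConnected B) ∧
    e 2 ∈ Fplus ∧ e 3 ∈ Fminus := by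
  refine ⟨finrank_ker, ?_, ?_, ?_, ?_, ?_, ?_, ?_, ?_⟩
  · ext v
    simp only [Fplus, Fnull, Fminus, Set.mem_union, Set.mem_setOf_eq]
    constructor
    · intro hv
      rcases lt_trichotomy (q v) 0 with h | h | h
      · exact Or.inr ⟨hv, h⟩
      · exact Or.inl (Or.inr ⟨hv, h⟩)
      · exact Or.inl (Or.inl ⟨hv, h⟩)
    · rintro ((⟨h, -⟩ | ⟨h, -⟩) | ⟨h, -⟩) <;> exact h
  · ext v
    simp only [Fnull, Set.mem_setOf_eq, mem_V_iff, q, Set.mem_union, SetLike.mem_coe,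
      mem_span1, mem_span2]
    constructor
    · rintro ⟨h0, hq⟩
      have : (v 3 - v 2) * (v 3 + v 2) = 0 := by nlinarith
      rcases mul_eq_zero.mp this with h | h
      · exact Or.inl ⟨h0, by linarith⟩
      · exact Or.inr ⟨h0, by linarith⟩
    · rintro (⟨h0, h3⟩ | ⟨h0, h3⟩) <;> exact ⟨h0, by rw [h3]; ring⟩
  · ext v
    simp only [Submodule.mem_inf, mem_span1, mem_span2, mem_span_e1]
    constructor
    · rintro ⟨⟨h0, h3⟩, ⟨-, h3'⟩⟩
      refine ⟨h0, by linarith, by linarith⟩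
    · rintro ⟨h0, h2, h3⟩
      exact ⟨⟨h0, by rw [h2, h3]⟩, ⟨h0, by rw [h2, h3]; ring⟩⟩
  · refine hasDerivAt_pi.mpr fun i => ?_
    fin_cases i
    · simpa [e_apply, Pi.neg_def] using ((hasDerivAt_pow 2 (0:ℝ)).neg)
    · simpa [e_apply] using (hasDerivAt_id' (0:ℝ))
    · simpa [e_apply] using (hasDerivAt_const (0:ℝ) (0:ℝ))
    · simpa [e_apply] using (hasDerivAt_const (0:ℝ) (0:ℝ))
  · exact ⟨Ap, Bp, Fplus_eq, disjAB, ⟨e 2, e2_mem_Ap⟩, ⟨-e 2, e2_mem_Bp⟩,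
      convexAp, convexBp, convexAp.isConnected ⟨e 2, e2_mem_Ap⟩,
      convexBp.isConnected ⟨-e 2, e2_mem_Bp⟩⟩
  · exact ⟨Am, Bm, Fminus_eq, disjABm, ⟨e 3, e3_mem_Am⟩, ⟨-e 3, e3_mem_Bm⟩,
      convexAm, convexBm, convexAm.isConnected ⟨e 3, e3_mem_Am⟩,
      convexBm.isConnected ⟨-e 3, e3_mem_Bm⟩⟩
  · exact ⟨(mem_V_iff _).mpr (by simp [e_apply]), by norm_num [q, e_apply, show (3:Fin 4) ≠ 2 from by decide, show (2:Fin 4) ≠ 3 from by decide]⟩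
  · exact ⟨(mem_V_iff _).mpr (by simp [e_apply]), by norm_num [q, e_apply, show (3:Fin 4) ≠ 2 from by decide, show (2:Fin 4) ≠ 3 from by decide]⟩


end
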